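/- For points in general position, Reay's dimension conjecture implies Kalai's cascade conjecture: if for all 0 <= k <= d every set of (r-1)(d+1)+k+1 points in general position in R^d satisfies dim(T_r(X)) >= k, then every finite set X of points in general position in R^d satisfies sum over s of dim(T_s(X)) >= 0. -/

import Mathlib

open MeasureTheory
open scoped Classical

/-- A finite set in ℝ^d is in general position if no d+1 of its points lie in a common
hyperplane, i.e. every subset of d+1 points is affinely independent. -/
def InGeneralPosition (d : ℕ) (X : Finset (Fin d → ℝ)) : Prop :=
  ∀ S ⊆ X, S.card = d + 1 → AffineIndependent ℝ (fun p : (S : Set (Fin d → ℝ)) => (p : Fin d → ℝ))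

/-- T_s(X): the set of points lying in the intersection of the convex hulls of the parts
of some partition of X into s parts. -/
def tverbergPoints (d s : ℕ) (X : Finset (Fin d → ℝ)) : Set (Fin d → ℝ) :=
  {p | ∃ P : Fin s → Finset (Fin d → ℝ),
    (∀ j, P j ⊆ X) ∧ (∀ j k, j ≠ k → Disjoint (P j) (P k)) ∧
    (∀ x ∈ X, ∃ j, x ∈ P j) ∧
    ∀ j, p ∈ convexHull ℝ ((P j : Set (Fin d → ℝ)))}

/-- Hausdorff dimension with the convention dim ∅ = -1, as a real number. -/
noncomputable def hdim (d : ℕ) (A : Set (Fin d → ℝ)) : ℝ :=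
  if A = ∅ then -1 else (dimH A).toReal

/-- Tverberg point sets are monotone in the point set (for s ≥ 1): extra points can be
added to one of the parts. -/
lemma tverbergPoints_mono {d s : ℕ} (hs : 1 ≤ s) {X' X : Finset (Fin d → ℝ)}
    (hXX : X' ⊆ X) : tverbergPoints d s X' ⊆ tverbergPoints d s X := by
  rintro p ⟨P, hsub, hdisj, hcov, hconv⟩
  have i0 : Fin s := ⟨0, hs⟩
  refine ⟨fun j => if j = i0 then P j ∪ (X \ X') else P j, ?_, ?_, ?_, ?_⟩
  · intro j
    by_cases h : j = i0 <;> simp only [h, if_pos, if_neg, ite_true, ite_false]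
    · exact Finset.union_subset ((hsub _).trans hXX) (Finset.sdiff_subset)
    · exact (hsub j).trans hXX
  · intro j k hjk
    have hd1 : ∀ m, Disjoint (X \ X') (P m) :=
      fun m => Finset.disjoint_left.2 fun x hx hx' =>
        (Finset.mem_sdiff.1 hx).2 (hsub m hx')
    by_cases hj : j = i0 <;> by_cases hk : k = i0
    · exact absurd (hj.trans hk.symm) hjk
    · subst hj
      simp only [ite_true, hk, ite_false]
      exact Finset.disjoint_union_left.2 ⟨hdisj _ _ hjk, hd1 k⟩
    · subst hk
      simp only [ite_true, hj, ite_false]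
      exact Finset.disjoint_union_right.2 ⟨hdisj _ _ hjk, (hd1 j).symm⟩
    · simp only [hj, hk, ite_false]
      exact hdisj _ _ hjk
  · intro x hx
    by_cases hx' : x ∈ X'
    · obtain ⟨j, hj⟩ := hcov x hx'
      refine ⟨j, ?_⟩
      by_cases h : j = i0
      · subst h
        simp only [ite_true, Finset.mem_union]
        exact Or.inl hj
      · simp only [h, ite_false]
        exact hj
    · exact ⟨i0, by simp only [ite_true, Finset.mem_union, Finset.mem_sdiff]; tauto⟩
  · intro j
    by_cases h : j = i0 <;> simp only [h, ite_true, ite_false]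
    · exact convexHull_mono (by exact_mod_cast Finset.subset_union_left) (hconv _)
    · exact hconv j

lemma hdim_ge_neg_one (d : ℕ) (A : Set (Fin d → ℝ)) : (-1 : ℝ) ≤ hdim d A := by
  unfold hdim
  split
  · exact le_refl _
  · have := ENNReal.toReal_nonneg (a := dimH A)
    linarith

lemma dimH_le_d {d : ℕ} (A : Set (Fin d → ℝ)) : dimH A ≤ (d : ENNReal) := by
  calc dimH A ≤ dimH (Set.univ : Set (Fin d → ℝ)) := dimH_mono (Set.subset_univ _)
    _ = (d : ENNReal) := Real.dimH_univ_pi_fin d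

lemma hdim_mono_of_le {d : ℕ} {A B : Set (Fin d → ℝ)} {c : ℝ} (hc : 0 ≤ c)
    (hA : c ≤ hdim d A) (hAB : A ⊆ B) : c ≤ hdim d B := by
  have hAne : A ≠ ∅ := by
    intro h
    rw [hdim, if_pos h] at hA
    linarith
  have hBne : B ≠ ∅ := fun h => hAne (Set.subset_eq_empty hAB h)
  rw [hdim, if_neg hAne] at hA
  rw [hdim, if_neg hBne]
  refine hA.trans (ENNReal.toReal_mono ?_ (dimH_mono hAB))
  exact ne_top_of_le_ne_top (ENNReal.natCast_ne_top d) (dimH_le_d B)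

/-- General position is inherited by subsets. -/
lemma inGeneralPosition_mono {d : ℕ} {X' X : Finset (Fin d → ℝ)} (h : X' ⊆ X)
    (hX : InGeneralPosition d X) : InGeneralPosition d X' :=
  fun S hS hcard => hX S (hS.trans h) hcard

/-- For points in general position, Reay's dimension conjecture implies Kalai's cascade
conjecture. -/
theorem cascade_of_reay (d : ℕ) (hd : 1 ≤ d)
    (reay : ∀ r k : ℕ, 1 ≤ r → k ≤ d → ∀ X : Finset (Fin d → ℝ),
      X.card = (r - 1) * (d + 1) + k + 1 → InGeneralPosition d X →
      (k : ℝ) ≤ hdim d (tverbergPoints d r X)) :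
    ∀ X : Finset (Fin d → ℝ), InGeneralPosition d X →
      0 ≤ ∑ s ∈ Finset.Icc 1 X.card, hdim d (tverbergPoints d s X) := by
  intro X hX
  set n := X.card with hn
  rcases Nat.eq_zero_or_pos n with h0 | hpos
  · simp [h0]
  -- write n = m*(d+1) + k + 1 with k ≤ d
  set m := (n - 1) / (d + 1) with hm
  set k := (n - 1) % (d + 1) with hk
  have hkd : k ≤ d := Nat.lt_succ_iff.1 (Nat.mod_lt _ (Nat.succ_pos d))
  have hnmk : n = m * (d + 1) + k + 1 := by
    have h := Nat.div_add_mod (n - 1) (d + 1)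
    rw [hm, hk, Nat.mul_comm]
    omega
  set r := m + 1 with hr
  have hrn : r ≤ n := by
    have : m ≤ m * (d + 1) := Nat.le_mul_of_pos_right m (Nat.succ_pos d)
    omega
  -- bound for s = r
  have hbr : (k : ℝ) ≤ hdim d (tverbergPoints d r X) := by
    apply reay r k (Nat.le_add_left 1 m) hkd X _ hX
    simpa [hr] using hnmk
  -- bound for 1 ≤ s ≤ m : hdim ≥ d
  have hbs : ∀ s, 1 ≤ s → s ≤ m → (d : ℝ) ≤ hdim d (tverbergPoints d s X) := by
    intro s hs1 hsm
    have hcard : (s - 1) * (d + 1) + d + 1 ≤ n := by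
      have heq : (s - 1) * (d + 1) + d + 1 = s * (d + 1) := by
        obtain ⟨t, rfl⟩ : ∃ t, s = t + 1 := ⟨s - 1, by omega⟩
        simp only [Nat.add_sub_cancel]
        ring
      rw [heq]
      calc s * (d + 1) ≤ m * (d + 1) := Nat.mul_le_mul_right _ hsm
        _ ≤ n := by omega
    obtain ⟨Y, hYX, hYcard⟩ := Finset.exists_subset_card_eq (hn ▸ hcard)
    have hYgp := inGeneralPosition_mono hYX hX
    have hY : (d : ℝ) ≤ hdim d (tverbergPoints d s Y) := by
      exact reay s d hs1 (le_refl d) Y hYcard hYgp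
    exact hdim_mono_of_le (by positivity) hY (tverbergPoints_mono hs1 hYX)
  -- split the sum
  have hsplit : ∑ s ∈ Finset.Icc 1 n, hdim d (tverbergPoints d s X) =
      (∑ s ∈ Finset.Ioc 0 m, hdim d (tverbergPoints d s X))
        + hdim d (tverbergPoints d r X)
        + ∑ s ∈ Finset.Ioc r n, hdim d (tverbergPoints d s X) := by
    have hIcc : Finset.Icc 1 n = Finset.Ioc 0 n := by
      ext x; simp [Finset.mem_Icc, Finset.mem_Ioc]; omega
    rw [hIcc, ← Finset.sum_Ioc_consecutive _ (Nat.zero_le r) hrn, hr,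
      Finset.sum_Ioc_succ_top (Nat.zero_le m)]
  rw [hsplit]
  have h1 : (m : ℝ) * d ≤ ∑ s ∈ Finset.Ioc 0 m, hdim d (tverbergPoints d s X) := by
    have := Finset.card_nsmul_le_sum (Finset.Ioc 0 m)
      (fun s => hdim d (tverbergPoints d s X)) (d : ℝ)
      (fun s hs => hbs s (Finset.mem_Ioc.1 hs).1 (Finset.mem_Ioc.1 hs).2)
    rw [Nat.card_Ioc] at this
    simpa [nsmul_eq_mul, mul_comm] using this
  have h2 : -((n : ℝ) - r) ≤ ∑ s ∈ Finset.Ioc r n, hdim d (tverbergPoints d s X) := by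
    have := Finset.card_nsmul_le_sum (Finset.Ioc r n)
      (fun s => hdim d (tverbergPoints d s X)) (-1 : ℝ)
      (fun s _ => hdim_ge_neg_one d _)
    rw [Nat.card_Ioc] at this
    have hc : ((n - r : ℕ) : ℝ) = (n : ℝ) - r := by
      rw [Nat.cast_sub hrn]
    simpa [nsmul_eq_mul, hc] using this
  have hcast : (n : ℝ) = m * (d + 1) + k + 1 := by exact_mod_cast congrArg Nat.cast hnmk
  have : (n : ℝ) - r = m * d + k := by
    rw [hcast]; push_cast [hr]; ring
  rw [this] at h2
  linarith
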